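/- (Forward direction of the point-mass theorem) If there exists α ∈ (0,1) with lim_{θ→θ_L} q_α(θ) > D_L, then there exists d* ∈ Ω_D such that lim_{θ→θ_L} C(θ; d*) ≥ α > 0; hence C has a point mass at the lower boundary. -/
import Mathlib


open Set Filter Topology

/-- Forward direction of the point-mass theorem: if for some `α ∈ (0,1)` the
quantile `q α θ` converges, as `θ → θl⁺`, to a limit `L > Dl` (it does not
reach the lower boundary of the sample space), then there is a point
`d* ∈ Ω_D` at which the confidence `C(θ; d*) = 1 - F θ d*` stays `≥ α > 0`
near `θl`, i.e. `lim_{θ→θl} C(θ; d*) ≥ α`: `C` has a point mass at the lower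
boundary. -/
theorem point_mass_of_quantile_not_to_boundary
    (θl θu Dl Du : ℝ) (hΘ : θl < θu) (hΩ : Dl < Du)
    (F : ℝ → ℝ → ℝ) (q : ℝ → ℝ → ℝ)
    (hFmono : ∀ θ ∈ Ioo θl θu, StrictMonoOn (F θ) (Ioo Dl Du))
    (α : ℝ) (hα : α ∈ Ioo (0 : ℝ) 1)
    (hq : ∀ θ ∈ Ioo θl θu, q α θ ∈ Ioo Dl Du ∧ F θ (q α θ) = 1 - α)
    (L : ℝ) (hL : Tendsto (q α) (𝓝[>] θl) (𝓝 L)) (hLgt : Dl < L) :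
    ∃ dstar ∈ Ioo Dl Du,
      (∀ᶠ θ in 𝓝[>] θl, α ≤ 1 - F θ dstar) ∧ 0 < α := by
  set m := min L Du with hm
  have hDlm : Dl < m := lt_min hLgt hΩ
  set dstar := (Dl + m) / 2 with hd
  have hd1 : Dl < dstar := by dsimp [dstar]; linarith
  have hd2 : dstar < m := by dsimp [dstar]; linarith
  have hdΩ : dstar ∈ Ioo Dl Du := ⟨hd1, lt_of_lt_of_le hd2 (min_le_right _ _)⟩
  refine ⟨dstar, hdΩ, ?_, hα.1⟩
  have h1 : ∀ᶠ θ in 𝓝[>] θl, dstar < q α θ :=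
    hL.eventually_const_lt (lt_of_lt_of_le hd2 (min_le_left _ _))
  have h2 : ∀ᶠ θ in 𝓝[>] θl, θ ∈ Ioo θl θu :=
    eventually_of_mem (Ioo_mem_nhdsGT_of_mem ⟨le_refl _, hΘ⟩) fun _ h => h
  filter_upwards [h1, h2] with θ hlt hθ
  obtain ⟨hqΩ, hqF⟩ := hq θ hθ
  have := hFmono θ hθ hdΩ hqΩ hlt
  linarith
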